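/- Let φ be the test function φ(x) = 1 for |x| ≤ 1, φ(x) = (1+(|x|-1)⁴)^{-(n+2s)/4} for |x| ≥ 1, with s ∈ (0,1]. Then there exists C > 0 with |Δφ(x)| ≤ C·φ(x) for all x ∈ ℝⁿ. -/

import Mathlib

set_option maxHeartbeats 1600000

namespace TFLB

noncomputable def m (t : ℝ) : ℝ := (max (Real.sqrt t - 1) 0) ^ 4
noncomputable def m1 (t : ℝ) : ℝ := if t ≤ 1 then 0 else 2 * (Real.sqrt t - 1) ^ 3 / Real.sqrt t
noncomputable def m2 (t : ℝ) : ℝ := if t ≤ 1 then 0 else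
  3 * (Real.sqrt t - 1) ^ 2 / t - (Real.sqrt t - 1) ^ 3 / Real.sqrt t ^ 3

lemma sqrt_lt_one {t : ℝ} (h : t < 1) : Real.sqrt t < 1 := by
  rw [Real.sqrt_lt' one_pos]; nlinarith

lemma one_lt_sqrt {t : ℝ} (h : 1 < t) : 1 < Real.sqrt t := by
  rw [show (1:ℝ) = Real.sqrt 1 by simp]
  exact Real.sqrt_lt_sqrt zero_le_one h

lemma sqrt_le_self {t : ℝ} (h : 1 ≤ t) : Real.sqrt t ≤ t := by
  have h1 : 1 ≤ Real.sqrt t := by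
    rw [show (1:ℝ) = Real.sqrt 1 by simp]; exact Real.sqrt_le_sqrt h
  have h2 : Real.sqrt t * Real.sqrt t = t := Real.mul_self_sqrt (by linarith)
  nlinarith

lemma m_eq_zero {t : ℝ} (h : t < 1) : m t = 0 := by
  have := sqrt_lt_one h
  simp [m, max_eq_right (by linarith : Real.sqrt t - 1 ≤ 0)]

lemma m_eq_of_gt {t : ℝ} (h : 1 < t) : m t = (Real.sqrt t - 1) ^ 4 := by
  have := one_lt_sqrt h
  simp [m, max_eq_left (by linarith : (0:ℝ) ≤ Real.sqrt t - 1)]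

lemma m1_eq_of_gt {t : ℝ} (h : 1 < t) : m1 t = 2 * (Real.sqrt t - 1) ^ 3 / Real.sqrt t := by
  simp [m1, not_le.mpr h]

lemma m2_eq_of_gt {t : ℝ} (h : 1 < t) :
    m2 t = 3 * (Real.sqrt t - 1) ^ 2 / t - (Real.sqrt t - 1) ^ 3 / Real.sqrt t ^ 3 := by
  simp [m2, not_le.mpr h]

/-- gluing lemma at t = 1 -/
lemma glue {f : ℝ → ℝ} (h0 : ∀ t ≤ 1, f t = 0)
    (hb : ∀ t, 1 < t → t ≤ 2 → |f t| ≤ 9 * (t - 1) ^ 2) : HasDerivAt f 0 1 := by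
  rw [hasDerivAt_iff_isLittleO]
  have hf1 : f 1 = 0 := h0 1 le_rfl
  simp only [hf1, smul_zero, sub_zero]
  rw [Asymptotics.isLittleO_iff]
  intro c hc
  rw [Metric.eventually_nhds_iff]
  refine ⟨min (c / 9) 1, by positivity, fun y hy => ?_⟩
  rcases le_or_gt y 1 with h | h
  · simp [h0 y h]; positivity
  · have hd : |y - 1| < min (c / 9) 1 := by simpa [Real.dist_eq] using hy
    have h1 : y - 1 < c / 9 := lt_of_lt_of_le (lt_of_abs_lt hd) (min_le_left _ _)
    have h2 : y ≤ 2 := by have := lt_of_lt_of_le (lt_of_abs_lt hd) (min_le_right _ _); linarith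
    calc ‖f y‖ ≤ 9 * (y - 1) ^ 2 := by rw [Real.norm_eq_abs]; exact hb y h h2
    _ ≤ c * ‖y - 1‖ := by
        rw [Real.norm_eq_abs, abs_of_pos (by linarith : (0:ℝ) < y - 1)]
        nlinarith

lemma hasDerivAt_m (t : ℝ) : HasDerivAt m (m1 t) t := by
  rcases lt_trichotomy t 1 with h | h | h
  · have heq : m =ᶠ[nhds t] fun _ => (0:ℝ) := by
      filter_upwards [Iio_mem_nhds h] with y hy
      exact m_eq_zero hy
    rw [heq.hasDerivAt_iff]
    simpa [m1, le_of_lt h] using hasDerivAt_const t (0:ℝ)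
  · subst h
    have hm1 : m1 1 = 0 := by simp [m1]
    rw [hm1]
    apply glue
    · intro t ht
      rcases lt_or_eq_of_le ht with h | h
      · exact m_eq_zero h
      · subst h; simp [m]
    · intro t h1 h2
      rw [m_eq_of_gt h1]
      have hu0 : 0 ≤ Real.sqrt t - 1 := by have := one_lt_sqrt h1; linarith
      have hu : Real.sqrt t - 1 ≤ t - 1 := by have := sqrt_le_self (le_of_lt h1); linarith
      have ht1 : t - 1 ≤ 1 := by linarith
      rw [abs_of_nonneg (by positivity)]
      have hp := pow_le_pow_left₀ hu0 hu 4
      have hsq2 : (t - 1) ^ 2 ≤ 1 := by nlinarith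
      nlinarith [sq_nonneg (t - 1), sq_nonneg ((t-1)^2)]
  · have hs : (0:ℝ) < Real.sqrt t := by have := one_lt_sqrt h; linarith
    have hd : HasDerivAt (fun y => (Real.sqrt y - 1) ^ 4)
        (4 * (Real.sqrt t - 1) ^ 3 * (1 / (2 * Real.sqrt t))) t := by
      have hsq : HasDerivAt (fun y => Real.sqrt y - 1) (1 / (2 * Real.sqrt t)) t := by
        simpa using ((hasDerivAt_id t).sqrt (by positivity)).sub_const 1
      simpa using (hsq.fun_pow 4)
    have heq : m =ᶠ[nhds t] fun y => (Real.sqrt y - 1) ^ 4 := by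
      filter_upwards [Ioi_mem_nhds h] with y hy
      exact m_eq_of_gt hy
    rw [heq.hasDerivAt_iff, m1_eq_of_gt h]
    refine hd.congr_deriv ?_
    field_simp
    ring

lemma hasDerivAt_m1 (t : ℝ) : HasDerivAt m1 (m2 t) t := by
  rcases lt_trichotomy t 1 with h | h | h
  · have heq : m1 =ᶠ[nhds t] fun _ => (0:ℝ) := by
      filter_upwards [Iio_mem_nhds h] with y hy
      simp [m1, (Set.mem_Iio.mp hy).le]
    rw [heq.hasDerivAt_iff]
    simpa [m2, le_of_lt h] using hasDerivAt_const t (0:ℝ)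
  · subst h
    have hm2 : m2 1 = 0 := by simp [m2]
    rw [hm2]
    apply glue
    · intro t ht; simp [m1, ht]
    · intro t h1 h2
      rw [m1_eq_of_gt h1]
      have hs1 : 1 < Real.sqrt t := one_lt_sqrt h1
      have hu0 : 0 ≤ Real.sqrt t - 1 := by linarith
      have hu : Real.sqrt t - 1 ≤ t - 1 := by have := sqrt_le_self (le_of_lt h1); linarith
      have ht1 : t - 1 ≤ 1 := by linarith
      have hb : 2 * (Real.sqrt t - 1) ^ 3 / Real.sqrt t ≤ 2 * (Real.sqrt t - 1) ^ 3 := by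
        apply div_le_self (by positivity) (le_of_lt hs1)
      rw [abs_of_nonneg (by positivity)]
      have hp := pow_le_pow_left₀ hu0 hu 3
      have hsq2 : (t - 1) ^ 3 ≤ (t - 1) ^ 2 := by nlinarith [sq_nonneg (t-1)]
      nlinarith [sq_nonneg (t - 1)]
  · have hs : (0:ℝ) < Real.sqrt t := by have := one_lt_sqrt h; linarith
    have ht0 : (0:ℝ) < t := by linarith
    have hsq : HasDerivAt (fun y => Real.sqrt y - 1) (1 / (2 * Real.sqrt t)) t := by
      simpa using ((hasDerivAt_id t).sqrt (by positivity)).sub_const 1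
    have hnum : HasDerivAt (fun y => 2 * (Real.sqrt y - 1) ^ 3)
        (2 * (3 * (Real.sqrt t - 1) ^ 2 * (1 / (2 * Real.sqrt t)))) t := by
      simpa [mul_comm, mul_assoc, mul_left_comm] using (hsq.pow 3).const_mul 2
    have hinv : HasDerivAt (fun y => (Real.sqrt y)⁻¹)
        (-(1 / (2 * Real.sqrt t)) / (Real.sqrt t) ^ 2) t := by
      simpa using ((hasDerivAt_id t).sqrt (by positivity)).fun_inv (ne_of_gt hs)
    have hd := hnum.fun_mul hinv
    have heq : m1 =ᶠ[nhds t] fun y => (2 * (Real.sqrt y - 1) ^ 3) * (Real.sqrt y)⁻¹ := by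
      filter_upwards [Ioi_mem_nhds h] with y hy
      rw [m1_eq_of_gt hy]; ring
    rw [heq.hasDerivAt_iff, m2_eq_of_gt h]
    refine hd.congr_deriv ?_
    have hts : Real.sqrt t ^ 2 = t := Real.sq_sqrt (le_of_lt ht0)
    set σ := Real.sqrt t with hσ
    rw [← hts]
    field_simp
    ring


lemma m1_eq_zero {t : ℝ} (h : t ≤ 1) : m1 t = 0 := by simp [m1, h]
lemma m2_eq_zero {t : ℝ} (h : t ≤ 1) : m2 t = 0 := by simp [m2, h]


noncomputable def F (p t : ℝ) : ℝ := (1 + m t) ^ (-p)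
noncomputable def F1 (p t : ℝ) : ℝ := -p * (1 + m t) ^ (-p - 1) * m1 t
noncomputable def F2 (p t : ℝ) : ℝ :=
  -p * ((-p - 1) * (1 + m t) ^ (-p - 1 - 1) * m1 t * m1 t + (1 + m t) ^ (-p - 1) * m2 t)

lemma m_nonneg (t : ℝ) : 0 ≤ m t := by unfold m; positivity

lemma one_add_m_pos (t : ℝ) : 0 < 1 + m t := by have := m_nonneg t; linarith

lemma F_pos (p t : ℝ) : 0 < F p t := Real.rpow_pos_of_pos (one_add_m_pos t) _

lemma hasDerivAt_F (p t : ℝ) : HasDerivAt (F p) (F1 p t) t := by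
  have h1 : HasDerivAt (fun y => 1 + m y) (m1 t) t := (hasDerivAt_m t).const_add 1
  have h2 := (Real.hasDerivAt_rpow_const (p := -p)
    (Or.inl (ne_of_gt (one_add_m_pos t)))).comp t h1
  unfold F; simpa [F1, Function.comp_def, mul_assoc] using h2

lemma hasDerivAt_F1 (p t : ℝ) : HasDerivAt (F1 p) (F2 p t) t := by
  have h1 : HasDerivAt (fun y => 1 + m y) (m1 t) t := (hasDerivAt_m t).const_add 1
  have hA : HasDerivAt (fun y => (1 + m y) ^ (-p - 1))
      ((-p - 1) * (1 + m t) ^ (-p - 1 - 1) * m1 t) t := by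
    have := (Real.hasDerivAt_rpow_const (p := -p - 1)
      (Or.inl (ne_of_gt (one_add_m_pos t)))).comp t h1
    simpa [Function.comp_def, mul_assoc] using this
  have := (hA.fun_mul (hasDerivAt_m1 t)).const_mul (-p)
  have he : F1 p = fun y => -p * ((1 + m y) ^ (-p - 1) * m1 y) := by
    funext y; unfold F1; ring
  rw [he]
  exact this.congr_deriv rfl

lemma key_bound (p : ℝ) (hp : 0 < p) (n : ℕ) (hn : 1 ≤ n) (t : ℝ) :
    |4 * t * F2 p t + 2 * (n : ℝ) * F1 p t| ≤
      (16 * p * (p + 1) + 16 * p + 4 * (n : ℝ) * p + 1) * F p t := by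
  have hnR : (1:ℝ) ≤ (n:ℝ) := by exact_mod_cast hn
  rcases le_or_gt t 1 with h | h
  · unfold F1 F2
    rw [m1_eq_zero h, m2_eq_zero h]
    simp only [mul_zero, zero_mul, add_zero, abs_zero]
    have := F_pos p t
    positivity
  · -- t > 1, set u = √t - 1
    set u := Real.sqrt t - 1 with hu_def
    have hs1 : 1 < Real.sqrt t := one_lt_sqrt h
    have hu0 : 0 < u := by rw [hu_def]; linarith
    have h1u : Real.sqrt t = 1 + u := by ring
    have ht : t = (1 + u) ^ 2 := by
      rw [← h1u, Real.sq_sqrt (by linarith : (0:ℝ) ≤ t)]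
    set B := 1 + m t with hB_def
    have hBu : B = 1 + u ^ 4 := by rw [hB_def, m_eq_of_gt h, ← hu_def]
    have hB1 : (1:ℝ) ≤ B := by rw [hBu]; nlinarith [pow_nonneg hu0.le 4]
    have hB0 : (0:ℝ) < B := by linarith
    have hm1v : m1 t = 2 * u ^ 3 / (1 + u) := by rw [m1_eq_of_gt h, ← hu_def, h1u]
    have hm2v : m2 t = 3 * u ^ 2 / (1 + u) ^ 2 - u ^ 3 / (1 + u) ^ 3 := by
      rw [m2_eq_of_gt h, ← hu_def, h1u, ← ht]
    have e1 : B ^ (-p - 1) = B ^ (-p) * B⁻¹ := by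
      rw [show -p - 1 = -p + (-1) by ring, Real.rpow_add hB0, Real.rpow_neg_one]
    have e2 : B ^ (-p - 1 - 1) = B ^ (-p) * B⁻¹ * B⁻¹ := by
      rw [show -p - 1 - 1 = (-p + (-1)) + (-1) by ring, Real.rpow_add hB0,
        Real.rpow_add hB0, Real.rpow_neg_one]
    have h1u0 : (0:ℝ) < 1 + u := by linarith
    set E : ℝ := 16 * p * (p + 1) * u ^ 6 / B ^ 2 - 12 * p * u ^ 2 / B
      + (4 * p - 4 * (n:ℝ) * p) * u ^ 3 / ((1 + u) * B) with hE_def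
    have hsplit : 4 * t * F2 p t + 2 * (n : ℝ) * F1 p t = B ^ (-p) * E := by
      unfold F2 F1
      rw [← hB_def, e1, e2, hm1v, hm2v, hE_def, ht]
      field_simp
      ring
    rw [hsplit]
    have hF : F p t = B ^ (-p) := by unfold F; rw [← hB_def]
    rw [hF, abs_mul, abs_of_pos (Real.rpow_pos_of_pos hB0 _)]
    rw [mul_comm (B ^ (-p))]
    apply mul_le_mul_of_nonneg_right _ (le_of_lt (Real.rpow_pos_of_pos hB0 _))
    -- now |E| ≤ C
    have ha : u ^ 6 / B ^ 2 ≤ 1 := by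
      rw [div_le_one (by positivity)]
      rw [hBu]; nlinarith [sq_nonneg (u^3 - u), sq_nonneg u, pow_pos hu0 4]
    have hb : u ^ 2 / B ≤ 1 := by
      rw [div_le_one hB0, hBu]; nlinarith [sq_nonneg (u^2 - 1)]
    have hc : u ^ 3 / B ≤ 1 := by
      rw [div_le_one hB0, hBu]; nlinarith [sq_nonneg (u^2 - u), sq_nonneg (u - 1), hu0.le]
    have hd : u ^ 3 / ((1 + u) * B) ≤ u ^ 3 / B := by
      apply div_le_div_of_nonneg_left (by positivity) hB0
      nlinarith
    have ha0 : 0 ≤ u ^ 6 / B ^ 2 := by positivity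
    have hb0 : 0 ≤ u ^ 2 / B := by positivity
    have hd0 : 0 ≤ u ^ 3 / ((1 + u) * B) := by positivity
    rw [hE_def]
    have hd1 : u ^ 3 / ((1 + u) * B) ≤ 1 := hd.trans hc
    have tri : |16 * p * (p + 1) * u ^ 6 / B ^ 2 - 12 * p * u ^ 2 / B
        + (4 * p - 4 * (n:ℝ) * p) * u ^ 3 / ((1 + u) * B)|
        ≤ |16 * p * (p + 1) * u ^ 6 / B ^ 2| + |12 * p * u ^ 2 / B|
          + |(4 * p - 4 * (n:ℝ) * p) * u ^ 3 / ((1 + u) * B)| :=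
      (abs_add_le _ _).trans (by
        have := abs_sub (16 * p * (p + 1) * u ^ 6 / B ^ 2) (12 * p * u ^ 2 / B)
        linarith)
    have A1 : |16 * p * (p + 1) * u ^ 6 / B ^ 2| ≤ 16 * p * (p + 1) := by
      rw [abs_of_nonneg (by positivity),
        show 16 * p * (p + 1) * u ^ 6 / B ^ 2 = 16 * p * (p + 1) * (u ^ 6 / B ^ 2) by ring]
      exact mul_le_of_le_one_right (by positivity) ha
    have A2 : |12 * p * u ^ 2 / B| ≤ 12 * p := by
      rw [abs_of_nonneg (by positivity),
        show 12 * p * u ^ 2 / B = 12 * p * (u ^ 2 / B) by ring]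
      exact mul_le_of_le_one_right (by positivity) hb
    have A3 : |(4 * p - 4 * (n:ℝ) * p) * u ^ 3 / ((1 + u) * B)| ≤ 4 * p + 4 * (n:ℝ) * p := by
      rw [show (4 * p - 4 * (n:ℝ) * p) * u ^ 3 / ((1 + u) * B)
          = (4 * p - 4 * (n:ℝ) * p) * (u ^ 3 / ((1 + u) * B)) by ring, abs_mul]
      have h1 : |4 * p - 4 * (n:ℝ) * p| ≤ 4 * p + 4 * (n:ℝ) * p := by
        rw [abs_le]; constructor <;> nlinarith
      have h2 : |u ^ 3 / ((1 + u) * B)| ≤ 1 := by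
        rw [abs_of_nonneg hd0]; exact hd1
      calc |4 * p - 4 * (n:ℝ) * p| * |u ^ 3 / ((1 + u) * B)|
          ≤ (4 * p + 4 * (n:ℝ) * p) * 1 :=
            mul_le_mul h1 h2 (abs_nonneg _) (by positivity)
        _ = 4 * p + 4 * (n:ℝ) * p := by ring
    nlinarith [tri, A1, A2, A3]
end TFLB

namespace TFLBG
variable {n : ℕ}
noncomputable def q (x : EuclideanSpace ℝ (Fin n)) : ℝ := ∑ i, x i ^ 2
noncomputable def L (x : EuclideanSpace ℝ (Fin n)) : EuclideanSpace ℝ (Fin n) →L[ℝ] ℝ :=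
  ∑ i, (2 * x i) • (EuclideanSpace.proj i : EuclideanSpace ℝ (Fin n) →L[ℝ] ℝ)

lemma hq (x : EuclideanSpace ℝ (Fin n)) : HasFDerivAt q (L x) x := by
  have h : ∀ i : Fin n, HasFDerivAt (fun y : EuclideanSpace ℝ (Fin n) => y i ^ 2)
      ((2 * x i) • (EuclideanSpace.proj i : EuclideanSpace ℝ (Fin n) →L[ℝ] ℝ)) x := by
    intro i
    have hp : HasFDerivAt (fun y : EuclideanSpace ℝ (Fin n) => y i)
        (EuclideanSpace.proj i : EuclideanSpace ℝ (Fin n) →L[ℝ] ℝ) x := by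
      have := (EuclideanSpace.proj (𝕜 := ℝ) (ι := Fin n) i).hasFDerivAt (x := x)
      exact this
    have := hp.fun_mul hp
    refine (this.congr_fderiv ?_).congr_of_eventuallyEq ?_
    · rw [two_mul]; module
    · exact Filter.Eventually.of_forall fun y => by ring
  exact HasFDerivAt.fun_sum (fun i _ => h i)

lemma L_apply (x : EuclideanSpace ℝ (Fin n)) (i : Fin n) :
    L x (EuclideanSpace.single i 1) = 2 * x i := by
  unfold L
  rw [ContinuousLinearMap.sum_apply]
  have : ∀ j : Fin n, ((2 * x j) • (EuclideanSpace.proj j : EuclideanSpace ℝ (Fin n) →L[ℝ] ℝ))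
      (EuclideanSpace.single i 1) = if j = i then 2 * x j else 0 := by
    intro j
    rw [ContinuousLinearMap.smul_apply]
    simp [PiLp.proj_apply, EuclideanSpace.single_apply]
  simp_rw [this]
  simp

lemma norm_eq_sqrt_q (x : EuclideanSpace ℝ (Fin n)) : ‖x‖ = Real.sqrt (q x) := by
  rw [EuclideanSpace.norm_eq]
  congr 1
  unfold q
  congr 1
  funext i
  rw [Real.norm_eq_abs, sq_abs]

end TFLBG

/-- For the test function `φ(x) = 1` for `|x| ≤ 1`, `φ(x) = (1+(|x|-1)⁴)^{-(n+2s)/4}` for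
`|x| ≥ 1`, with `s ∈ (0,1]`, there is `C > 0` with `|Δφ(x)| ≤ C φ(x)` for all `x`. -/
theorem test_function_laplacian_bound (n : ℕ) (hn : 1 ≤ n) (s : ℝ) (hs0 : 0 < s)
    (hs1 : s ≤ 1) (φ : EuclideanSpace ℝ (Fin n) → ℝ)
    (hφ : ∀ x, φ x = if ‖x‖ ≤ 1 then 1 else
      (1 + (‖x‖ - 1) ^ 4) ^ (-((n : ℝ) + 2 * s) / 4)) :
    ∃ C > 0, ∀ x,
      |∑ i : Fin n, fderiv ℝ (fun y => fderiv ℝ φ y (EuclideanSpace.single i 1)) x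
          (EuclideanSpace.single i 1)| ≤ C * φ x := by
  classical
  set p : ℝ := ((n : ℝ) + 2 * s) / 4 with hp_def
  have hnn : (0:ℝ) ≤ (n:ℝ) := Nat.cast_nonneg n
  have hp : 0 < p := by
    rw [hp_def]
    have : (0:ℝ) < (n:ℝ) + 2 * s := by nlinarith
    linarith
  refine ⟨16 * p * (p + 1) + 16 * p + 4 * (n : ℝ) * p + 1, by nlinarith, ?_⟩
  intro x
  have hφF : φ = fun y => TFLB.F p (TFLBG.q y) := by
    funext y
    rw [hφ y]
    have hnorm : ‖y‖ = Real.sqrt (TFLBG.q y) := TFLBG.norm_eq_sqrt_q y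
    unfold TFLB.F TFLB.m
    rw [← hnorm]
    split_ifs with h
    · rw [max_eq_right (by linarith : ‖y‖ - 1 ≤ 0)]
      norm_num
    · push_neg at h
      rw [max_eq_left (by linarith : (0:ℝ) ≤ ‖y‖ - 1)]
      congr 1
      rw [hp_def]; ring
  have hD1 : ∀ y, HasFDerivAt φ (TFLB.F1 p (TFLBG.q y) • TFLBG.L y) y := by
    intro y
    rw [hφF]
    exact (TFLB.hasDerivAt_F p (TFLBG.q y)).comp_hasFDerivAt y (TFLBG.hq y)
  have hfe : ∀ (i : Fin n), (fun y => fderiv ℝ φ y (EuclideanSpace.single i 1))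
      = fun y => TFLB.F1 p (TFLBG.q y) * (2 * y i) := by
    intro i; funext y
    rw [(hD1 y).fderiv]
    rw [ContinuousLinearMap.smul_apply, TFLBG.L_apply, smul_eq_mul]
  have hD2 : ∀ (i : Fin n), HasFDerivAt (fun y => TFLB.F1 p (TFLBG.q y) * (2 * y i))
      (TFLB.F1 p (TFLBG.q x) • ((2:ℝ) • (EuclideanSpace.proj i : EuclideanSpace ℝ (Fin n) →L[ℝ] ℝ))
        + (2 * x i) • (TFLB.F2 p (TFLBG.q x) • TFLBG.L x)) x := by
    intro i
    have hc : HasFDerivAt (fun y => TFLB.F1 p (TFLBG.q y))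
        (TFLB.F2 p (TFLBG.q x) • TFLBG.L x) x :=
      (TFLB.hasDerivAt_F1 p (TFLBG.q x)).comp_hasFDerivAt x (TFLBG.hq x)
    have hd : HasFDerivAt (fun y : EuclideanSpace ℝ (Fin n) => 2 * y i)
        ((2:ℝ) • (EuclideanSpace.proj i : EuclideanSpace ℝ (Fin n) →L[ℝ] ℝ)) x := by
      have hp' : HasFDerivAt (fun y : EuclideanSpace ℝ (Fin n) => y i)
          (EuclideanSpace.proj (𝕜 := ℝ) (ι := Fin n) i) x := by
        have := (EuclideanSpace.proj (𝕜 := ℝ) (ι := Fin n) i).hasFDerivAt (x := x)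
        exact this
      exact hp'.const_mul 2
    exact hc.mul hd
  have hterm : ∀ i : Fin n, fderiv ℝ (fun y => fderiv ℝ φ y (EuclideanSpace.single i 1)) x
      (EuclideanSpace.single i 1)
      = 2 * TFLB.F1 p (TFLBG.q x) + 4 * (x i)^2 * TFLB.F2 p (TFLBG.q x) := by
    intro i
    rw [hfe i, (hD2 i).fderiv]
    simp only [ContinuousLinearMap.add_apply, ContinuousLinearMap.smul_apply]
    rw [TFLBG.L_apply]
    simp only [PiLp.proj_apply, EuclideanSpace.single_apply, if_pos rfl, smul_eq_mul,
      if_true, ite_true]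
    ring
  have hsum : ∑ i : Fin n, fderiv ℝ (fun y => fderiv ℝ φ y (EuclideanSpace.single i 1)) x
      (EuclideanSpace.single i 1)
      = 4 * TFLBG.q x * TFLB.F2 p (TFLBG.q x) + 2 * (n:ℝ) * TFLB.F1 p (TFLBG.q x) := by
    simp_rw [hterm]
    rw [Finset.sum_add_distrib, Finset.sum_const, Finset.card_univ, Fintype.card_fin,
      nsmul_eq_mul]
    have h2 : ∑ i : Fin n, 4 * (x i)^2 * TFLB.F2 p (TFLBG.q x)
        = 4 * TFLBG.q x * TFLB.F2 p (TFLBG.q x) := by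
      rw [show (4 : ℝ) * TFLBG.q x * TFLB.F2 p (TFLBG.q x)
          = (∑ i : Fin n, (x i)^2) * (4 * TFLB.F2 p (TFLBG.q x)) by
        unfold TFLBG.q; ring]
      rw [Finset.sum_mul]
      exact Finset.sum_congr rfl fun i _ => by ring
    rw [h2]; ring
  rw [hsum, show φ x = TFLB.F p (TFLBG.q x) from by rw [hφF]]
  exact TFLB.key_bound p hp n hn (TFLBG.q x)
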